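/- For Dueck's source, the conditional entropy satisfies H(S_2 | S_1) ≤ h_b(2/(k a^{ηk})) + (2 log a)/a^{ηk}; in particular H(S_2|S_1) → 0 as a → ∞ for fixed k, η. -/

import Mathlib

open Finset

/-- Binary entropy (natural log). -/
noncomputable def binEnt (p : ℝ) : ℝ := -(p * Real.log p) - (1 - p) * Real.log (1 - p)

/-- The joint pmf of Dueck's source on `({0,…,a-1}^k)²`. -/
noncomputable def dueckW (k η a : ℕ) (h : 2 ≤ a) :
    (Fin k → Fin a) × (Fin k → Fin a) → ℝ := fun pr =>
  let z : Fin k → Fin a := fun _ => ⟨0, by omega⟩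
  if pr.1 = z ∧ pr.2 = z then ((k : ℝ) - 1) / (k : ℝ)
  else if pr.1 = pr.2 then
    ((a : ℝ) ^ (η * k) - 1) / ((k : ℝ) * (a : ℝ) ^ (η * k) * ((a : ℝ) ^ k - 1))
  else if pr.1 = z then 1 / ((k : ℝ) * (a : ℝ) ^ (η * k) * ((a : ℝ) ^ k - 1))
  else 0

/-- The conditional entropy `H(S₂ | S₁)` of Dueck's source (joint entropy minus the
entropy of the first marginal); set to `0` for `a < 2`. -/
noncomputable def dueckCondEnt (k η a : ℕ) : ℝ :=
  if h : 2 ≤ a then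
    (∑ pr : (Fin k → Fin a) × (Fin k → Fin a), Real.negMulLog (dueckW k η a h pr))
      - ∑ c : Fin k → Fin a, Real.negMulLog (∑ d : Fin k → Fin a, dueckW k η a h (c, d))
  else 0

lemma sum_ite_const {α : Type*} [Fintype α] [DecidableEq α] (z : α) (x y : ℝ) :
    ∑ d : α, (if d = z then x else y) = x + ((Fintype.card α : ℝ) - 1) * y := by
  have h : ∀ d : α, (if d = z then x else y) = y + (if d = z then x - y else 0) := by
    intro d; split <;> ring
  simp_rw [h]
  rw [Finset.sum_add_distrib, Finset.sum_const,
    Finset.sum_ite_eq' Finset.univ z (fun _ => x - y)]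
  simp only [Finset.mem_univ, if_pos, Finset.card_univ, nsmul_eq_mul]
  ring

lemma abstract_calc {α : Type*} [Fintype α] [DecidableEq α] (z : α) (P1 P2 P3 : ℝ)
    (W : α × α → ℝ)
    (hW : ∀ c d, W (c, d) =
      if c = z then (if d = z then P1 else P3) else (if d = c then P2 else 0)) :
    (∑ pr : α × α, Real.negMulLog (W pr)) - (∑ c : α, Real.negMulLog (∑ d : α, W (c, d)))
      = Real.negMulLog P1 + ((Fintype.card α : ℝ) - 1) * Real.negMulLog P3
        - Real.negMulLog (P1 + ((Fintype.card α : ℝ) - 1) * P3) := by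
  have h1 : ∀ c : α, ∑ d : α, Real.negMulLog (W (c, d)) =
      if c = z then Real.negMulLog P1 + ((Fintype.card α : ℝ) - 1) * Real.negMulLog P3
      else Real.negMulLog P2 := by
    intro c
    by_cases hc : c = z
    · rw [if_pos hc]
      have hd : ∀ d : α, Real.negMulLog (W (c, d)) =
          if d = z then Real.negMulLog P1 else Real.negMulLog P3 := by
        intro d; rw [hW, if_pos hc, apply_ite Real.negMulLog]
      simp_rw [hd]
      exact sum_ite_const z _ _
    · rw [if_neg hc]
      have hd : ∀ d : α, Real.negMulLog (W (c, d)) =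
          if d = c then Real.negMulLog P2 else 0 := by
        intro d; rw [hW, if_neg hc, apply_ite Real.negMulLog, Real.negMulLog_zero]
      simp_rw [hd]
      rw [sum_ite_const c _ _]
      ring
  have h2 : ∀ c : α, (∑ d : α, W (c, d))
      = if c = z then P1 + ((Fintype.card α : ℝ) - 1) * P3 else P2 := by
    intro c
    by_cases hc : c = z
    · rw [if_pos hc]
      have hd : ∀ d : α, W (c, d) = if d = z then P1 else P3 := by
        intro d; rw [hW, if_pos hc]
      simp_rw [hd]
      exact sum_ite_const z _ _
    · rw [if_neg hc]
      have hd : ∀ d : α, W (c, d) = if d = c then P2 else 0 := by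
        intro d; rw [hW, if_neg hc]
      simp_rw [hd]
      rw [sum_ite_const c _ _]
      ring
  rw [Fintype.sum_prod_type]
  simp_rw [h1, h2, apply_ite Real.negMulLog, sum_ite_const]
  ring

lemma dueckCondEnt_eq (k η a : ℕ) (hk : 2 ≤ k) (ha : 2 ≤ a) :
    dueckCondEnt k η a =
      Real.negMulLog (((k : ℝ) - 1) / (k : ℝ))
        + Real.negMulLog (1 / ((k : ℝ) * (a : ℝ) ^ (η * k)))
        - Real.negMulLog (((k : ℝ) - 1) / (k : ℝ) + 1 / ((k : ℝ) * (a : ℝ) ^ (η * k)))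
        + (1 / ((k : ℝ) * (a : ℝ) ^ (η * k))) * Real.log ((a : ℝ) ^ k - 1) := by
  classical
  rw [dueckCondEnt, dif_pos ha]
  set z : Fin k → Fin a := fun _ => ⟨0, by omega⟩ with hz
  set P1 : ℝ := ((k : ℝ) - 1) / (k : ℝ) with hP1
  set P2 : ℝ := ((a : ℝ) ^ (η * k) - 1) / ((k : ℝ) * (a : ℝ) ^ (η * k) * ((a : ℝ) ^ k - 1))
    with hP2
  set P3 : ℝ := 1 / ((k : ℝ) * (a : ℝ) ^ (η * k) * ((a : ℝ) ^ k - 1)) with hP3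
  have hW : ∀ c d : Fin k → Fin a, dueckW k η a ha (c, d) =
      if c = z then (if d = z then P1 else P3) else (if d = c then P2 else 0) := by
    intro c d
    show (if c = z ∧ d = z then P1 else if c = d then P2 else if c = z then P3 else 0) = _
    by_cases hc : c = z
    · by_cases hd : d = z
      · simp [hc, hd]
      · have hcd : ¬ c = d := fun h => hd (h ▸ hc)
        have hzd : ¬ z = d := fun h => hd h.symm
        simp [hc, hd, hcd, hzd]
    · by_cases hcd : c = d
      · subst hcd
        simp [hc]
      · have hdc : ¬ d = c := fun h => hcd h.symm
        simp [hc, hcd, hdc]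
  rw [abstract_calc z P1 P2 P3 (dueckW k η a ha) hW]
  have hcard : (Fintype.card (Fin k → Fin a) : ℝ) = (a : ℝ) ^ k := by
    rw [Fintype.card_fun, Fintype.card_fin, Fintype.card_fin]
    push_cast
    rfl
  rw [hcard]
  -- numeric facts
  have ha2 : (2 : ℝ) ≤ (a : ℝ) := by exact_mod_cast ha
  have hN : (4 : ℝ) ≤ (a : ℝ) ^ k := by
    calc (4 : ℝ) = 2 ^ 2 := by norm_num
    _ ≤ 2 ^ k := pow_le_pow_right₀ one_le_two hk
    _ ≤ (a : ℝ) ^ k := pow_le_pow_left₀ (by norm_num) ha2 k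
  have hm0 : (0 : ℝ) < (a : ℝ) ^ k - 1 := by linarith
  have hK0 : (0 : ℝ) < (k : ℝ) := by positivity
  have hA0 : (0 : ℝ) < (a : ℝ) ^ (η * k) := by positivity
  have hq : ((a : ℝ) ^ k - 1) * P3 = 1 / ((k : ℝ) * (a : ℝ) ^ (η * k)) := by
    rw [hP3]; field_simp
  have key : ((a : ℝ) ^ k - 1) * Real.negMulLog P3
      = Real.negMulLog (1 / ((k : ℝ) * (a : ℝ) ^ (η * k)))
        + (1 / ((k : ℝ) * (a : ℝ) ^ (η * k))) * Real.log ((a : ℝ) ^ k - 1) := by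
    have hP3' : P3 = (1 / ((k : ℝ) * (a : ℝ) ^ (η * k))) / ((a : ℝ) ^ k - 1) := by
      rw [hP3]; field_simp
    rw [Real.negMulLog, Real.negMulLog, hP3',
      Real.log_div (by positivity) (ne_of_gt hm0)]
    field_simp
    ring
  rw [hq, key]
  ring

lemma binEnt_eq (t : ℝ) : binEnt t = Real.negMulLog t + Real.negMulLog (1 - t) := by
  simp [binEnt, Real.negMulLog]; ring

lemma step1_aux (p q : ℝ) (hp0 : 0 < p) (hq0 : 0 < q) (hpq1 : p + q ≤ 1) :
    Real.negMulLog p - Real.negMulLog (p + q) ≤ q := by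
  have hpq0 : (0 : ℝ) < p + q := by linarith
  rw [Real.negMulLog, Real.negMulLog]
  have hx : Real.log (p + q) - Real.log p ≤ q / p := by
    rw [← Real.log_div (ne_of_gt hpq0) (ne_of_gt hp0)]
    have h1 : Real.log ((p + q) / p) ≤ (p + q) / p - 1 :=
      Real.log_le_sub_one_of_pos (by positivity)
    have h2 : (p + q) / p - 1 = q / p := by field_simp; ring
    linarith
  have h1 : p * (Real.log (p + q) - Real.log p) ≤ p * (q / p) :=
    mul_le_mul_of_nonneg_left hx hp0.le
  have h2 : p * (q / p) = q := by field_simp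
  have h3 : q * Real.log (p + q) ≤ 0 :=
    mul_nonpos_of_nonneg_of_nonpos hq0.le (Real.log_nonpos hpq0.le hpq1)
  nlinarith [h1, h2, h3]

lemma step2_aux (q : ℝ) (hq0 : 0 < q) (hqs : q ≤ 1 / 128) :
    Real.negMulLog q + q ≤ Real.negMulLog (2 * q) := by
  have hlog3 : (1 : ℝ) ≤ Real.log 3 := by
    rw [Real.le_log_iff_exp_le (by norm_num)]
    exact le_trans Real.exp_one_lt_d9.le (by norm_num)
  have h4q : Real.log (4 * q) ≤ -1 := by
    have h1 : (4 : ℝ) * q ≤ 1 / 3 := by linarith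
    have h2 : Real.log (4 * q) ≤ Real.log (1 / 3) :=
      Real.log_le_log (by positivity) h1
    have h3 : Real.log (1 / 3) = -Real.log 3 := by
      rw [one_div, Real.log_inv]
    linarith
  have hl4 : Real.log (4 * q) = Real.log 4 + Real.log q :=
    Real.log_mul (by norm_num) (ne_of_gt hq0)
  have hl42 : Real.log 4 = 2 * Real.log 2 := by
    rw [show (4 : ℝ) = 2 ^ 2 by norm_num, Real.log_pow]
    push_cast; ring
  have hl2 : Real.log (2 * q) = Real.log 2 + Real.log q :=
    Real.log_mul (by norm_num) (ne_of_gt hq0)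
  have hb : 2 * Real.log 2 + Real.log q + 1 ≤ 0 := by
    rw [hl4, hl42] at h4q; linarith
  have hc : q * (2 * Real.log 2 + Real.log q + 1) ≤ 0 :=
    mul_nonpos_of_nonneg_of_nonpos hq0.le hb
  rw [Real.negMulLog, Real.negMulLog, hl2]
  nlinarith [hc]

lemma subadd_aux (p q : ℝ) (hp0 : 0 < p) (hq0 : 0 < q) :
    Real.negMulLog (p + q) ≤ Real.negMulLog p + Real.negMulLog q := by
  rw [Real.negMulLog, Real.negMulLog, Real.negMulLog]
  have l1 : Real.log p ≤ Real.log (p + q) := Real.log_le_log hp0 (by linarith)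
  have l2 : Real.log q ≤ Real.log (p + q) := Real.log_le_log hq0 (by linarith)
  nlinarith [mul_le_mul_of_nonneg_left l1 hp0.le, mul_le_mul_of_nonneg_left l2 hq0.le]

/-- Shared bounds lemma: nonnegativity and the upper bound. -/
lemma dueck_bounds (k η a : ℕ) (hk : 2 ≤ k) (hη : 6 ≤ η) (ha : 2 ≤ a) :
    0 ≤ dueckCondEnt k η a ∧
      dueckCondEnt k η a ≤ binEnt (2 / ((k : ℝ) * (a : ℝ) ^ (η * k)))
        + 2 * Real.log (a : ℝ) / (a : ℝ) ^ (η * k) := by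
  have ha2 : (2 : ℝ) ≤ (a : ℝ) := by exact_mod_cast ha
  have hK2 : (2 : ℝ) ≤ (k : ℝ) := by exact_mod_cast hk
  have hK0 : (0 : ℝ) < (k : ℝ) := by linarith
  set A : ℝ := (a : ℝ) ^ (η * k) with hA_def
  have hA64 : (64 : ℝ) ≤ A := by
    calc (64 : ℝ) = 2 ^ 6 := by norm_num
    _ ≤ 2 ^ (η * k) := pow_le_pow_right₀ one_le_two (by nlinarith)
    _ ≤ (a : ℝ) ^ (η * k) := pow_le_pow_left₀ (by norm_num) ha2 _
  have hA0 : (0 : ℝ) < A := by linarith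
  set p : ℝ := ((k : ℝ) - 1) / (k : ℝ) with hp_def
  set q : ℝ := 1 / ((k : ℝ) * A) with hq_def
  have hp_eq : p = 1 - 1 / (k : ℝ) := by rw [hp_def]; field_simp
  have hKinv : 1 / (k : ℝ) ≤ 1 / 2 := by
    apply one_div_le_one_div_of_le <;> linarith
  have hp0 : (0 : ℝ) < p := by rw [hp_eq]; linarith
  have hp1 : p ≤ 1 := by
    rw [hp_eq]
    have : 0 ≤ 1 / (k : ℝ) := by positivity
    linarith
  have hKA : (128 : ℝ) ≤ (k : ℝ) * A := by nlinarith
  have hq0 : (0 : ℝ) < q := by rw [hq_def]; positivity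
  have hqs : q ≤ 1 / 128 := by
    rw [hq_def]
    apply one_div_le_one_div_of_le <;> linarith
  have hqK : q ≤ 1 / (k : ℝ) := by
    rw [hq_def]
    apply one_div_le_one_div_of_le
    · linarith
    · nlinarith
  have hpq1 : p + q ≤ 1 := by rw [hp_eq]; linarith
  have hpq0 : (0 : ℝ) < p + q := by linarith
  have hN : (4 : ℝ) ≤ (a : ℝ) ^ k := by
    calc (4 : ℝ) = 2 ^ 2 := by norm_num
    _ ≤ 2 ^ k := pow_le_pow_right₀ one_le_two hk
    _ ≤ (a : ℝ) ^ k := pow_le_pow_left₀ (by norm_num) ha2 k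
  have hEq := dueckCondEnt_eq k η a hk ha
  rw [← hA_def, ← hp_def, ← hq_def] at hEq
  have step1 : Real.negMulLog p - Real.negMulLog (p + q) ≤ q :=
    step1_aux p q hp0 hq0 hpq1
  have step2 : Real.negMulLog q + q ≤ Real.negMulLog (2 * q) :=
    step2_aux q hq0 hqs
  -- Step 4 : q * log ((a)^k - 1) ≤ 2 log a / A
  have hloga : 0 ≤ Real.log (a : ℝ) := Real.log_nonneg (by linarith)
  have step4 : q * Real.log ((a : ℝ) ^ k - 1) ≤ 2 * Real.log (a : ℝ) / A := by
    have h1 : Real.log ((a : ℝ) ^ k - 1) ≤ Real.log ((a : ℝ) ^ k) :=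
      Real.log_le_log (by linarith) (by linarith)
    rw [Real.log_pow] at h1
    have h2 : q * Real.log ((a : ℝ) ^ k - 1) ≤ q * ((k : ℝ) * Real.log (a : ℝ)) := by
      apply mul_le_mul_of_nonneg_left _ hq0.le
      exact h1
    have h3 : q * ((k : ℝ) * Real.log (a : ℝ)) = Real.log (a : ℝ) / A := by
      rw [hq_def]; field_simp
    have h4 : Real.log (a : ℝ) / A ≤ 2 * Real.log (a : ℝ) / A := by
      have h5 : 0 ≤ Real.log (a : ℝ) / A := by positivity
      have h6 : 2 * Real.log (a : ℝ) / A = 2 * (Real.log (a : ℝ) / A) := by ring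
      linarith
    linarith
  constructor
  · -- nonnegativity
    rw [hEq]
    have hsub : Real.negMulLog (p + q) ≤ Real.negMulLog p + Real.negMulLog q :=
      subadd_aux p q hp0 hq0
    have hlogm : 0 ≤ Real.log ((a : ℝ) ^ k - 1) := Real.log_nonneg (by linarith)
    linarith [mul_nonneg hq0.le hlogm]
  · -- upper bound
    rw [hEq]
    have h2q : 2 / ((k : ℝ) * A) = 2 * q := by rw [hq_def]; ring
    rw [h2q, binEnt_eq]
    have hnn : 0 ≤ Real.negMulLog (1 - 2 * q) :=
      Real.negMulLog_nonneg (by linarith) (by linarith)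
    linarith [step1, step2, step4, hnn]

/-- For Dueck's source, `H(S₂|S₁) ≤ h_b(2/(k a^{ηk})) + (2 log a)/a^{ηk}`; in particular
`H(S₂|S₁) → 0` as `a → ∞` for fixed `k, η`. -/
theorem stmt_13 (k η : ℕ) (hk : 2 ≤ k) (hη : 6 ≤ η) (hηe : Even η) :
    (∀ a : ℕ, 2 ≤ a →
      dueckCondEnt k η a
        ≤ binEnt (2 / ((k : ℝ) * (a : ℝ) ^ (η * k)))
            + 2 * Real.log (a : ℝ) / (a : ℝ) ^ (η * k)) ∧
    Filter.Tendsto (fun a : ℕ => dueckCondEnt k η a) Filter.atTop (nhds 0) := by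
  have hmain : ∀ a : ℕ, 2 ≤ a →
      dueckCondEnt k η a ≤ binEnt (2 / ((k : ℝ) * (a : ℝ) ^ (η * k)))
        + 2 * Real.log (a : ℝ) / (a : ℝ) ^ (η * k) :=
    fun a ha => (dueck_bounds k η a hk hη ha).2
  refine ⟨hmain, ?_⟩
  have hηk : η * k ≠ 0 := by positivity
  have hK0 : (0 : ℝ) < (k : ℝ) := by positivity
  -- the power tends to infinity
  have hpow : Filter.Tendsto (fun a : ℕ => (a : ℝ) ^ (η * k)) Filter.atTop Filter.atTop :=
    (Filter.tendsto_pow_atTop hηk).comp tendsto_natCast_atTop_atTop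
  -- part A: binEnt (2/(k a^{ηk})) → 0
  have hA : Filter.Tendsto (fun a : ℕ => binEnt (2 / ((k : ℝ) * (a : ℝ) ^ (η * k))))
      Filter.atTop (nhds 0) := by
    have hcont : Continuous binEnt := by
      have : binEnt = fun t => Real.negMulLog t + Real.negMulLog (1 - t) := by
        funext t; exact binEnt_eq t
      rw [this]
      exact (Real.continuous_negMulLog).add
        (Real.continuous_negMulLog.comp (continuous_const.sub continuous_id))
    have harg : Filter.Tendsto (fun a : ℕ => 2 / ((k : ℝ) * (a : ℝ) ^ (η * k)))
        Filter.atTop (nhds 0) :=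
      Filter.Tendsto.div_atTop tendsto_const_nhds (Filter.Tendsto.const_mul_atTop hK0 hpow)
    have h0 : binEnt 0 = 0 := by simp [binEnt]
    have := (hcont.tendsto 0).comp harg
    rw [h0] at this
    exact this
  -- part B: 2 log a / a^{ηk} → 0
  have hB : Filter.Tendsto (fun a : ℕ => 2 * Real.log (a : ℝ) / (a : ℝ) ^ (η * k))
      Filter.atTop (nhds 0) := by
    have hj : η * k - 1 ≠ 0 := by
      have : 12 ≤ η * k := by nlinarith
      omega
    have hup : Filter.Tendsto (fun a : ℕ => 2 / (a : ℝ) ^ (η * k - 1))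
        Filter.atTop (nhds 0) :=
      Filter.Tendsto.div_atTop tendsto_const_nhds
        ((Filter.tendsto_pow_atTop hj).comp tendsto_natCast_atTop_atTop)
    apply tendsto_of_tendsto_of_tendsto_of_le_of_le' tendsto_const_nhds hup
    · filter_upwards [Filter.eventually_ge_atTop 1] with a ha
      have ha1 : (1 : ℝ) ≤ (a : ℝ) := by exact_mod_cast ha
      have : 0 ≤ Real.log (a : ℝ) := Real.log_nonneg ha1
      positivity
    · filter_upwards [Filter.eventually_ge_atTop 1] with a ha
      have ha1 : (1 : ℝ) ≤ (a : ℝ) := by exact_mod_cast ha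
      have ha0 : (0 : ℝ) < (a : ℝ) := by linarith
      have hlog : Real.log (a : ℝ) ≤ (a : ℝ) := by
        have := Real.log_le_sub_one_of_pos ha0
        linarith
      have hsplit : (a : ℝ) ^ (η * k) = (a : ℝ) ^ (η * k - 1) * (a : ℝ) := by
        rw [← pow_succ]
        congr 1
        omega
      have hP0 : (0 : ℝ) < (a : ℝ) ^ (η * k) := by positivity
      calc 2 * Real.log (a : ℝ) / (a : ℝ) ^ (η * k)
          ≤ 2 * (a : ℝ) / (a : ℝ) ^ (η * k) := by gcongr
        _ = 2 / (a : ℝ) ^ (η * k - 1) := by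
          rw [hsplit]
          field_simp
  have hsum := hA.add hB
  rw [add_zero] at hsum
  apply tendsto_of_tendsto_of_tendsto_of_le_of_le' tendsto_const_nhds hsum
  · filter_upwards [Filter.eventually_ge_atTop 2] with a ha
    exact (dueck_bounds k η a hk hη ha).1
  · filter_upwards [Filter.eventually_ge_atTop 2] with a ha
    exact hmain a ha
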